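/- Let w be a smooth periodic function on Ω_ε=[0,l₁]×[0,l₂]×[0,ε] with Fourier coefficients ŵ(m,n,p) vanishing for p=0 (i.e., Qw=w, meaning w has zero average in the third variable). Then ‖w‖_{L^∞} ≤ c ε^{1/2} ‖D²w‖_{L²}, where c depends only on l₁, l₂, and D² is the Fourier multiplier with symbol (2π)²(m²/l₁²+n²/l₂²+p²/ε²). -/

import Mathlib

open MeasureTheory Real Finset

lemma aux_amgm (L t a : ℝ) (hL : 0 < L) (ht : 0 < t) (ha : 0 ≤ a) :
    a ≤ t/2 * L⁻¹ + 1/(2*t) * (L * a^2) := by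
  rw [← sub_nonneg]
  have h : t/2 * L⁻¹ + 1/(2*t) * (L * a^2) - a = (t - L*a)^2 / (2*t*L) := by
    field_simp
    ring
  rw [h]
  positivity

lemma aux_nat_sum (l d : ℝ) (hl : 0 < l) (hd : 1/l^2 ≤ d) (N : ℕ) :
    ∑ n ∈ Finset.range N, (1:ℝ)/((n:ℝ)^2/l^2 + d) ≤ 5 * l / Real.sqrt d := by
  have hd0 : 0 < d := lt_of_lt_of_le (by positivity) hd
  have hsd : 0 < Real.sqrt d := Real.sqrt_pos.mpr hd0
  have hdd : Real.sqrt d * Real.sqrt d = d := Real.mul_self_sqrt hd0.le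
  have hlsd : 1 ≤ l * Real.sqrt d := by
    have h1 : (1:ℝ)/l ≤ Real.sqrt d := by
      have : (1:ℝ)/l = Real.sqrt (1/l^2) := by
        rw [show (1:ℝ)/l^2 = (1/l)^2 by ring, Real.sqrt_sq (by positivity)]
      rw [this]
      exact Real.sqrt_le_sqrt hd
    calc (1:ℝ) = l * (1/l) := by field_simp
    _ ≤ l * Real.sqrt d := by nlinarith
  set M := ⌈l * Real.sqrt d⌉₊ with hM
  have hMge : l * Real.sqrt d ≤ (M:ℝ) := Nat.le_ceil _
  have hMle : (M:ℝ) ≤ l * Real.sqrt d + 1 := (Nat.ceil_lt_add_one (by positivity)).le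
  have hpt : ∀ n ∈ Finset.range N, (1:ℝ)/((n:ℝ)^2/l^2 + d) ≤
      (if n ≤ M then 1/d else 0) + (if M < n then ((n:ℝ)^2)⁻¹ * l^2 else 0) := by
    intro n _
    by_cases h : n ≤ M
    · simp only [h, if_true, show ¬ M < n by omega, if_false]
      rw [add_zero]
      apply one_div_le_one_div_of_le hd0
      have := div_nonneg (sq_nonneg ((n:ℝ))) (sq_nonneg l)
      linarith
    · simp only [h, if_false, show M < n by omega, if_true]
      rw [zero_add]
      have hn0 : (0:ℝ) < (n:ℝ) := by exact_mod_cast Nat.pos_of_ne_zero (by omega)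
      calc (1:ℝ)/((n:ℝ)^2/l^2 + d) ≤ 1/((n:ℝ)^2/l^2) :=
            one_div_le_one_div_of_le (by positivity) (by linarith)
      _ = ((n:ℝ)^2)⁻¹ * l^2 := by field_simp
  calc ∑ n ∈ Finset.range N, (1:ℝ)/((n:ℝ)^2/l^2 + d)
      ≤ ∑ n ∈ Finset.range N, ((if n ≤ M then (1:ℝ)/d else 0) +
          (if M < n then ((n:ℝ)^2)⁻¹ * l^2 else 0)) := Finset.sum_le_sum hpt
    _ = (∑ n ∈ Finset.range N, (if n ≤ M then (1:ℝ)/d else 0)) +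
        ∑ n ∈ Finset.range N, (if M < n then ((n:ℝ)^2)⁻¹ * l^2 else 0) := Finset.sum_add_distrib
    _ ≤ ((M:ℝ)+1)/d + 2/((M:ℝ)+1) * l^2 := by
        gcongr
        · rw [← Finset.sum_filter]
          rw [Finset.sum_const]
          have hcard : ((Finset.range N).filter (fun n => n ≤ M)).card ≤ M + 1 := by
            have : ((Finset.range N).filter (fun n => n ≤ M)) ⊆ Finset.range (M+1) := by
              intro n hn
              simp only [Finset.mem_filter, Finset.mem_range] at hn ⊢
              omega
            simpa using Finset.card_le_card this
          rw [nsmul_eq_mul, div_eq_mul_one_div ((M:ℝ)+1)]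
          gcongr
          exact_mod_cast hcard
        · rw [← Finset.sum_filter]
          have hf : (Finset.range N).filter (fun n => M < n) = Finset.Ioo M N := by
            ext n
            simp only [Finset.mem_filter, Finset.mem_range, Finset.mem_Ioo]
            omega
          rw [hf, ← Finset.sum_mul]
          gcongr
          have := sum_Ioo_inv_sq_le (α := ℝ) M N
          calc ∑ n ∈ Finset.Ioo M N, ((n:ℝ)^2)⁻¹ = ∑ n ∈ Finset.Ioo M N, ((n^2 : ℕ):ℝ)⁻¹ := by
                apply Finset.sum_congr rfl; intro n _; push_cast; ring
          _ ≤ 2/((M:ℝ)+1) := by exact_mod_cast this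
    _ ≤ 5 * l / Real.sqrt d := by
        have h1 : ((M:ℝ)+1)/d ≤ 3 * l / Real.sqrt d := by
          rw [div_le_div_iff₀ hd0 hsd]
          nlinarith
        have h2 : 2/((M:ℝ)+1) * l^2 ≤ 2 * l / Real.sqrt d := by
          rw [div_mul_eq_mul_div, div_le_div_iff₀ (by linarith) hsd]
          nlinarith
        have h3 : 5 * l / Real.sqrt d = 3 * l / Real.sqrt d + 2 * l / Real.sqrt d := by ring
        linarith

lemma aux_even_int (f : ℤ → ℝ) (g : ℕ → ℝ) (hg : ∀ n : ℕ, f (n:ℤ) = g n)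
    (heven : ∀ n : ℕ, f (-(n:ℤ)) = g n) (hgs : Summable g) :
    Summable f ∧ ∑' m : ℤ, f m = 2 * (∑' n : ℕ, g n) - f 0 := by
  have hnat : Summable fun n : ℕ => f (n:ℤ) := hgs.congr (fun n => (hg n).symm)
  have hneg : Summable fun n : ℕ => f (-(n:ℤ)) := hgs.congr (fun n => (heven n).symm)
  refine ⟨Summable.of_nat_of_neg hnat hneg, ?_⟩
  rw [Summable.tsum_of_nat_of_neg hnat hneg, tsum_congr hg, tsum_congr heven]
  ring

lemma aux_int_sum (l d : ℝ) (hl : 0 < l) (hd : 1/l^2 ≤ d) :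
    Summable (fun m : ℤ => 1/((m:ℝ)^2/l^2 + d)) ∧
    ∑' m : ℤ, 1/((m:ℝ)^2/l^2 + d) ≤ 10 * l / Real.sqrt d := by
  have hd0 : 0 < d := lt_of_lt_of_le (by positivity) hd
  have hnat : Summable (fun n : ℕ => 1/((n:ℝ)^2/l^2 + d)) :=
    summable_of_sum_range_le (fun n => by positivity) (aux_nat_sum l d hl hd)
  obtain ⟨hsumm, heq⟩ := aux_even_int (fun m : ℤ => 1/((m:ℝ)^2/l^2 + d))
    (fun n : ℕ => 1/((n:ℝ)^2/l^2 + d))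
    (fun n => by push_cast; ring_nf) (fun n => by push_cast; ring_nf) hnat
  refine ⟨hsumm, ?_⟩
  rw [heq]
  have b1 : ∑' n : ℕ, 1/((n:ℝ)^2/l^2 + d) ≤ 5 * l / Real.sqrt d :=
    Real.tsum_le_of_sum_range_le (fun n => by positivity) (aux_nat_sum l d hl hd)
  have h0 : (0:ℝ) ≤ 1/((((0:ℤ)):ℝ)^2/l^2 + d) := by positivity
  have h3 : 10 * l / Real.sqrt d = 2 * (5 * l / Real.sqrt d) := by ring
  linarith

lemma aux_p_sum : Summable (fun p : ℤ => 1/max ((p:ℝ)^2) 1) ∧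
    ∑' p : ℤ, 1/max ((p:ℝ)^2) 1 ≤ 5 := by
  have key : ∀ N : ℕ, ∑ n ∈ Finset.range N, (1:ℝ)/max ((n:ℝ)^2) 1 ≤ 3 := by
    intro N
    have hpt : ∀ n ∈ Finset.range N, (1:ℝ)/max ((n:ℝ)^2) 1 ≤
        (if n = 0 then (1:ℝ) else 0) + (if 0 < n then ((n:ℝ)^2)⁻¹ else 0) := by
      intro n _
      rcases Nat.eq_zero_or_pos n with h | h
      · subst h; norm_num
      · have h1 : (1:ℝ) ≤ (n:ℝ)^2 := by
          have : (1:ℝ) ≤ (n:ℝ) := by exact_mod_cast h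
          nlinarith
        simp [Nat.pos_iff_ne_zero.mp h, h, max_eq_left h1, one_div]
    calc ∑ n ∈ Finset.range N, (1:ℝ)/max ((n:ℝ)^2) 1
        ≤ ∑ n ∈ Finset.range N, ((if n = 0 then (1:ℝ) else 0) +
            (if 0 < n then ((n:ℝ)^2)⁻¹ else 0)) := Finset.sum_le_sum hpt
      _ = (∑ n ∈ Finset.range N, (if n = 0 then (1:ℝ) else 0)) +
          ∑ n ∈ Finset.range N, (if 0 < n then ((n:ℝ)^2)⁻¹ else 0) := Finset.sum_add_distrib
      _ ≤ 1 + 2 := by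
          gcongr
          · rw [Finset.sum_ite_eq' (Finset.range N) 0 (fun _ => (1:ℝ))]
            split <;> norm_num
          · rw [← Finset.sum_filter]
            have hf : (Finset.range N).filter (fun n => 0 < n) = Finset.Ioo 0 N := by
              ext n; simp only [Finset.mem_filter, Finset.mem_range, Finset.mem_Ioo]; omega
            rw [hf]
            have := sum_Ioo_inv_sq_le (α := ℝ) 0 N
            calc ∑ n ∈ Finset.Ioo 0 N, ((n:ℝ)^2)⁻¹ = ∑ n ∈ Finset.Ioo 0 N, ((n^2 : ℕ):ℝ)⁻¹ := by
                  apply Finset.sum_congr rfl; intro n _; push_cast; ring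
            _ ≤ 2/((0:ℝ)+1) := by exact_mod_cast this
            _ ≤ 2 := by norm_num
      _ = 3 := by norm_num
  have hnat : Summable (fun n : ℕ => 1/max ((n:ℝ)^2) 1) :=
    summable_of_sum_range_le (fun n => by positivity) key
  obtain ⟨hsumm, heq⟩ := aux_even_int (fun p : ℤ => 1/max ((p:ℝ)^2) 1)
    (fun n : ℕ => 1/max ((n:ℝ)^2) 1)
    (fun n => by push_cast; ring_nf) (fun n => by push_cast; ring_nf) hnat
  refine ⟨hsumm, ?_⟩
  rw [heq]
  have b1 : ∑' n : ℕ, 1/max ((n:ℝ)^2) 1 ≤ 3 :=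
    Real.tsum_le_of_sum_range_le (fun n => by positivity) key
  have h0 : (1:ℝ)/max ((((0:ℤ)):ℝ)^2) 1 = 1 := by norm_num
  linarith

def auxFlipEquiv : (ℤ×ℤ×ℤ) ≃ (ℤ×ℤ×ℤ) where
  toFun k := (k.2.2, k.1, k.2.1)
  invFun q := (q.2.1, q.2.2, q.1)
  left_inv k := rfl
  right_inv q := rfl

set_option maxHeartbeats 1000000 in
lemma aux_T_bound (l₁ l₂ ε : ℝ) (hl₂ : 0 < l₂) (hl : l₂ ≤ l₁) (hε : 0 < ε) (hεl : ε < l₂/4) :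
    Summable (fun k : ℤ×ℤ×ℤ => if k.2.2 = 0 then (0:ℝ) else
      (((k.1:ℝ)^2/l₁^2 + (k.2.1:ℝ)^2/l₂^2 + (k.2.2:ℝ)^2/ε^2)^2)⁻¹) ∧
    ∑' k : ℤ×ℤ×ℤ, (if k.2.2 = 0 then (0:ℝ) else
      (((k.1:ℝ)^2/l₁^2 + (k.2.1:ℝ)^2/l₂^2 + (k.2.2:ℝ)^2/ε^2)^2)⁻¹) ≤ 1000*(l₁*l₂)*ε^2 := by
  have hl₁ : 0 < l₁ := lt_of_lt_of_le hl₂ hl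
  set d : ℤ → ℝ := fun p => max ((p:ℝ)^2) 1 / (2*ε^2) with hd_def
  have hd2 : ∀ p : ℤ, 1/l₂^2 ≤ d p := by
    intro p
    have h1 : (1:ℝ) ≤ max ((p:ℝ)^2) 1 := le_max_right _ _
    have h2 : 2*ε^2 ≤ l₂^2 := by nlinarith
    calc (1:ℝ)/l₂^2 ≤ 1/(2*ε^2) := by
          apply one_div_le_one_div_of_le (by positivity) h2
    _ ≤ d p := by
          rw [hd_def]
          exact div_le_div_of_nonneg_right h1 (by positivity)
  have hd1 : ∀ p : ℤ, 1/l₁^2 ≤ d p := by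
    intro p
    calc (1:ℝ)/l₁^2 ≤ 1/l₂^2 := by
          apply one_div_le_one_div_of_le (by positivity)
          nlinarith
    _ ≤ d p := hd2 p
  have hd0 : ∀ p : ℤ, 0 < d p := fun p => lt_of_lt_of_le (by positivity) (hd1 p)
  -- per-p facts
  have hF := fun p : ℤ => aux_int_sum l₁ (d p) hl₁ (hd1 p)
  have hG := fun p : ℤ => aux_int_sum l₂ (d p) hl₂ (hd2 p)
  set H : ℤ×ℤ×ℤ → ℝ := fun q =>
    (1/((q.2.1:ℝ)^2/l₁^2 + d q.1)) * (1/((q.2.2:ℝ)^2/l₂^2 + d q.1)) with hH_def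
  have hHnn : ∀ q, 0 ≤ H q := by
    intro q
    have := (hd0 q.1).le
    positivity
  have hFGsum : ∀ p : ℤ, Summable (fun mn : ℤ×ℤ =>
      (1/((mn.1:ℝ)^2/l₁^2 + d p)) * (1/((mn.2:ℝ)^2/l₂^2 + d p))) := by
    intro p
    exact (hF p).1.mul_of_nonneg (hG p).1
      (fun m => by have := (hd0 p).le; positivity) (fun n => by have := (hd0 p).le; positivity)
  have hFGts : ∀ p : ℤ, ∑' mn : ℤ×ℤ,
      (1/((mn.1:ℝ)^2/l₁^2 + d p)) * (1/((mn.2:ℝ)^2/l₂^2 + d p)) ≤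
      200*(l₁*l₂)*ε^2 * (1/max ((p:ℝ)^2) 1) := by
    intro p
    have hnF : Summable (fun m : ℤ => ‖1/((m:ℝ)^2/l₁^2 + d p)‖) :=
      (hF p).1.congr (fun m => (Real.norm_of_nonneg (by have := (hd0 p).le; positivity)).symm)
    have hnG : Summable (fun n : ℤ => ‖1/((n:ℝ)^2/l₂^2 + d p)‖) :=
      (hG p).1.congr (fun n => (Real.norm_of_nonneg (by have := (hd0 p).le; positivity)).symm)
    rw [← tsum_mul_tsum_of_summable_norm hnF hnG]
    have hsd : 0 < Real.sqrt (d p) := Real.sqrt_pos.mpr (hd0 p)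
    have hdd : Real.sqrt (d p) * Real.sqrt (d p) = d p := Real.mul_self_sqrt (hd0 p).le
    have hb1 : (0:ℝ) ≤ ∑' m : ℤ, 1/((m:ℝ)^2/l₁^2 + d p) :=
      tsum_nonneg (fun m => by have := (hd0 p).le; positivity)
    calc (∑' m : ℤ, 1/((m:ℝ)^2/l₁^2 + d p)) * ∑' n : ℤ, 1/((n:ℝ)^2/l₂^2 + d p)
        ≤ (10*l₁/Real.sqrt (d p)) * (10*l₂/Real.sqrt (d p)) := by
          apply mul_le_mul (hF p).2 (hG p).2
            (tsum_nonneg (fun n => by have := (hd0 p).le; positivity)) (by positivity)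
    _ = 100*(l₁*l₂) / d p := by
          rw [div_mul_div_comm, hdd]; ring
    _ = 200*(l₁*l₂)*ε^2 * (1/max ((p:ℝ)^2) 1) := by
          rw [hd_def]
          have h1 : (0:ℝ) < max ((p:ℝ)^2) 1 := lt_of_lt_of_le one_pos (le_max_right _ _)
          field_simp
          ring
  have hmajsum : Summable (fun p : ℤ => 200*(l₁*l₂)*ε^2 * (1/max ((p:ℝ)^2) 1)) :=
    aux_p_sum.1.mul_left _
  have houter : Summable (fun p : ℤ => ∑' mn : ℤ×ℤ,
      (1/((mn.1:ℝ)^2/l₁^2 + d p)) * (1/((mn.2:ℝ)^2/l₂^2 + d p))) := by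
    apply Summable.of_nonneg_of_le
      (fun p => tsum_nonneg (fun mn => by have := (hd0 p).le; positivity)) hFGts hmajsum
  have hHsum : Summable H := by
    rw [hH_def]
    apply (summable_prod_of_nonneg (f := fun q : ℤ × (ℤ×ℤ) =>
      (1/((q.2.1:ℝ)^2/l₁^2 + d q.1)) * (1/((q.2.2:ℝ)^2/l₂^2 + d q.1)))
      (fun q => by have := (hd0 q.1).le; positivity)).2
    exact ⟨hFGsum, houter⟩
  have hHts : ∑' q, H q ≤ 1000*(l₁*l₂)*ε^2 := by
    rw [hH_def, Summable.tsum_prod' hHsum hFGsum]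
    calc ∑' p : ℤ, ∑' mn : ℤ×ℤ,
          (1/(((mn.1:ℝ))^2/l₁^2 + d p)) * (1/((mn.2:ℝ)^2/l₂^2 + d p))
        ≤ ∑' p : ℤ, 200*(l₁*l₂)*ε^2 * (1/max ((p:ℝ)^2) 1) :=
          Summable.tsum_le_tsum hFGts houter hmajsum
    _ = 200*(l₁*l₂)*ε^2 * ∑' p : ℤ, 1/max ((p:ℝ)^2) 1 := tsum_mul_left
    _ ≤ 200*(l₁*l₂)*ε^2 * 5 := by
          have := aux_p_sum.2
          gcongr
    _ = 1000*(l₁*l₂)*ε^2 := by ring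
  -- compare V with H ∘ e
  have hHe : Summable (fun k : ℤ×ℤ×ℤ => H (auxFlipEquiv k)) :=
    (auxFlipEquiv.summable_iff (f := H)).mpr hHsum
  have hVH : ∀ k : ℤ×ℤ×ℤ, (if k.2.2 = 0 then (0:ℝ) else
      (((k.1:ℝ)^2/l₁^2 + (k.2.1:ℝ)^2/l₂^2 + (k.2.2:ℝ)^2/ε^2)^2)⁻¹) ≤ H (auxFlipEquiv k) := by
    rintro ⟨m, n, p⟩
    by_cases hp : p = 0
    · simp only [hp, if_pos rfl]
      exact hHnn _
    · simp only [if_neg hp]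
      have h1 : (1:ℝ) ≤ ((p:ℝ))^2 := by
        have : (1:ℤ) ≤ p^2 := by rcases lt_or_gt_of_ne hp with h|h <;> nlinarith
        exact_mod_cast this
      have hdp : d p = (p:ℝ)^2/(2*ε^2) := by rw [hd_def]; simp [max_eq_left h1]
      set A : ℝ := (m:ℝ)^2/l₁^2 with hA
      set B : ℝ := (n:ℝ)^2/l₂^2 with hB
      have hA0 : 0 ≤ A := by positivity
      have hB0 : 0 ≤ B := by positivity
      have hAd : 0 < A + d p := by have := hd0 p; linarith
      have hBd : 0 < B + d p := by have := hd0 p; linarith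
      have hΛ : (A + d p) * (B + d p) ≤ (A + B + (p:ℝ)^2/ε^2)^2 := by
        have h2 : A + d p ≤ A + B + (p:ℝ)^2/ε^2 := by
          rw [hdp]
          have : (p:ℝ)^2/(2*ε^2) ≤ (p:ℝ)^2/ε^2 := by
            apply div_le_div_of_nonneg_left (by positivity) (by positivity) (by nlinarith)
          linarith
        have h3 : B + d p ≤ A + B + (p:ℝ)^2/ε^2 := by
          rw [hdp]
          have : (p:ℝ)^2/(2*ε^2) ≤ (p:ℝ)^2/ε^2 := by
            apply div_le_div_of_nonneg_left (by positivity) (by positivity) (by nlinarith)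
          linarith
        calc (A + d p) * (B + d p) ≤ (A + B + (p:ℝ)^2/ε^2) * (A + B + (p:ℝ)^2/ε^2) :=
              mul_le_mul h2 h3 hBd.le (by nlinarith)
        _ = (A + B + (p:ℝ)^2/ε^2)^2 := (sq _).symm
      show ((A + B + (p:ℝ)^2/ε^2)^2)⁻¹ ≤ (1/(A + d p)) * (1/(B + d p))
      rw [one_div_mul_one_div, one_div]
      exact inv_anti₀ (by positivity) hΛ
  have hVnn : ∀ k : ℤ×ℤ×ℤ, 0 ≤ (if k.2.2 = 0 then (0:ℝ) else
      (((k.1:ℝ)^2/l₁^2 + (k.2.1:ℝ)^2/l₂^2 + (k.2.2:ℝ)^2/ε^2)^2)⁻¹) := by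
    intro k
    by_cases h : k.2.2 = 0
    · simp [h]
    · simp only [if_neg h]
      positivity
  have hVsum : Summable (fun k : ℤ×ℤ×ℤ => if k.2.2 = 0 then (0:ℝ) else
      (((k.1:ℝ)^2/l₁^2 + (k.2.1:ℝ)^2/l₂^2 + (k.2.2:ℝ)^2/ε^2)^2)⁻¹) :=
    Summable.of_nonneg_of_le hVnn hVH hHe
  refine ⟨hVsum, ?_⟩
  calc ∑' k : ℤ×ℤ×ℤ, (if k.2.2 = 0 then (0:ℝ) else
      (((k.1:ℝ)^2/l₁^2 + (k.2.1:ℝ)^2/l₂^2 + (k.2.2:ℝ)^2/ε^2)^2)⁻¹)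
      ≤ ∑' k : ℤ×ℤ×ℤ, H (auxFlipEquiv k) := Summable.tsum_le_tsum hVH hVsum hHe
  _ = ∑' q : ℤ×ℤ×ℤ, H q := auxFlipEquiv.tsum_eq H
  _ ≤ 1000*(l₁*l₂)*ε^2 := hHts

set_option maxHeartbeats 1000000 in
/-- `‖w‖_∞ ≤ c ε^{1/2} ‖D²w‖₂` for periodic `w` on the thin box `Ω_ε` with `Qw = w`
(i.e. Fourier coefficients vanish for `p = 0`); `c` depends only on `l₁, l₂`. -/
theorem linf_bound_thin_domain (l₁ l₂ : ℝ) (hl₂ : 0 < l₂) (hl : l₂ ≤ l₁) :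
    ∃ c : ℝ, 0 < c ∧
      ∀ ε : ℝ, 0 < ε → ε < l₂ / 4 →
      ∀ (w : ℝ × ℝ × ℝ → ℂ) (what : ℤ × ℤ × ℤ → ℂ),
        (∀ m n : ℤ, what (m, n, 0) = 0) →
        (∀ x y z : ℝ, w (x, y, z) =
          ∑' k : ℤ × ℤ × ℤ, what k *
            Complex.exp (2 * (Real.pi : ℂ) * Complex.I *
              ((k.1 : ℂ) * (x : ℂ) / (l₁ : ℂ) + (k.2.1 : ℂ) * (y : ℂ) / (l₂ : ℂ) +
                (k.2.2 : ℂ) * (z : ℂ) / (ε : ℂ)))) →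
        Summable (fun k : ℤ × ℤ × ℤ => ‖what k‖) →
        Summable (fun k : ℤ × ℤ × ℤ =>
          ((k.1 : ℝ) ^ 2 / l₁ ^ 2 + (k.2.1 : ℝ) ^ 2 / l₂ ^ 2 + (k.2.2 : ℝ) ^ 2 / ε ^ 2) ^ 2 *
            ‖what k‖ ^ 2) →
        ∀ x y z : ℝ,
          ‖w (x, y, z)‖ ≤
            c * Real.sqrt ε * Real.sqrt ((2 * Real.pi) ^ 4 * (l₁ * l₂ * ε) *
              ∑' k : ℤ × ℤ × ℤ,
                ((k.1 : ℝ) ^ 2 / l₁ ^ 2 + (k.2.1 : ℝ) ^ 2 / l₂ ^ 2 +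
                    (k.2.2 : ℝ) ^ 2 / ε ^ 2) ^ 2 * ‖what k‖ ^ 2) := by
  refine ⟨32, by norm_num, ?_⟩
  intro ε hε hεl w what hQ hw habs hS2 x y z
  have hl₁ : 0 < l₁ := lt_of_lt_of_le hl₂ hl
  obtain ⟨hVsum, hVle⟩ := aux_T_bound l₁ l₂ ε hl₂ hl hε hεl
  set S : ℝ := ∑' k : ℤ × ℤ × ℤ,
      ((k.1 : ℝ) ^ 2 / l₁ ^ 2 + (k.2.1 : ℝ) ^ 2 / l₂ ^ 2 +
        (k.2.2 : ℝ) ^ 2 / ε ^ 2) ^ 2 * ‖what k‖ ^ 2 with hS_def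
  set T : ℝ := ∑' k : ℤ×ℤ×ℤ, (if k.2.2 = 0 then (0:ℝ) else
      (((k.1:ℝ)^2/l₁^2 + (k.2.1:ℝ)^2/l₂^2 + (k.2.2:ℝ)^2/ε^2)^2)⁻¹) with hT_def
  have hSnn : 0 ≤ S := tsum_nonneg (fun k => by positivity)
  have hTnn : 0 ≤ T := tsum_nonneg (fun k => by
    by_cases h : k.2.2 = 0
    · simp [h]
    · simp only [if_neg h]; positivity)
  -- Step 1 : |w| ≤ ∑ |ŵ|
  have h1 : ∀ k : ℤ×ℤ×ℤ, ‖what k * Complex.exp (2 * (Real.pi : ℂ) * Complex.I *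
      ((k.1 : ℂ) * (x : ℂ) / (l₁ : ℂ) + (k.2.1 : ℂ) * (y : ℂ) / (l₂ : ℂ) +
        (k.2.2 : ℂ) * (z : ℂ) / (ε : ℂ)))‖ = ‖what k‖ := by
    intro k
    rw [norm_mul]
    have harg : (2 * (Real.pi : ℂ) * Complex.I *
        ((k.1 : ℂ) * (x : ℂ) / (l₁ : ℂ) + (k.2.1 : ℂ) * (y : ℂ) / (l₂ : ℂ) +
          (k.2.2 : ℂ) * (z : ℂ) / (ε : ℂ))) =
        ((2*Real.pi*((k.1:ℝ)*x/l₁ + (k.2.1:ℝ)*y/l₂ + (k.2.2:ℝ)*z/ε) : ℝ) : ℂ) * Complex.I := by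
      push_cast
      ring
    rw [harg, Complex.norm_exp_ofReal_mul_I, mul_one]
  have step1 : ‖w (x, y, z)‖ ≤ ∑' k : ℤ×ℤ×ℤ, ‖what k‖ := by
    rw [hw x y z]
    calc ‖∑' k : ℤ × ℤ × ℤ, what k *
            Complex.exp (2 * (Real.pi : ℂ) * Complex.I *
              ((k.1 : ℂ) * (x : ℂ) / (l₁ : ℂ) + (k.2.1 : ℂ) * (y : ℂ) / (l₂ : ℂ) +
                (k.2.2 : ℂ) * (z : ℂ) / (ε : ℂ)))‖
        ≤ ∑' k : ℤ×ℤ×ℤ, ‖what k *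
            Complex.exp (2 * (Real.pi : ℂ) * Complex.I *
              ((k.1 : ℂ) * (x : ℂ) / (l₁ : ℂ) + (k.2.1 : ℂ) * (y : ℂ) / (l₂ : ℂ) +
                (k.2.2 : ℂ) * (z : ℂ) / (ε : ℂ)))‖ :=
          norm_tsum_le_tsum_norm (habs.congr (fun k => (h1 k).symm))
    _ = ∑' k : ℤ×ℤ×ℤ, ‖what k‖ := tsum_congr h1
  -- Step 2 : Cauchy–Schwarz via AM-GM
  have step2 : ∀ t : ℝ, 0 < t →
      (∑' k : ℤ×ℤ×ℤ, ‖what k‖) ≤ t/2 * T + 1/(2*t) * S := by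
    intro t ht
    have hpt : ∀ k : ℤ×ℤ×ℤ, ‖what k‖ ≤
        t/2 * (if k.2.2 = 0 then (0:ℝ) else
          (((k.1:ℝ)^2/l₁^2 + (k.2.1:ℝ)^2/l₂^2 + (k.2.2:ℝ)^2/ε^2)^2)⁻¹) +
        1/(2*t) * (((k.1 : ℝ) ^ 2 / l₁ ^ 2 + (k.2.1 : ℝ) ^ 2 / l₂ ^ 2 +
            (k.2.2 : ℝ) ^ 2 / ε ^ 2) ^ 2 * ‖what k‖ ^ 2) := by
      rintro ⟨m, n, p⟩
      by_cases hp : p = 0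
      · subst hp
        simp only [if_pos rfl]
        rw [hQ m n]
        simp only [norm_zero]
        positivity
      · simp only [if_neg hp]
        have h1' : (1:ℝ) ≤ ((p:ℝ))^2 := by
          have : (1:ℤ) ≤ p^2 := by rcases lt_or_gt_of_ne hp with h|h <;> nlinarith
          exact_mod_cast this
        have hL : (0:ℝ) < ((m:ℝ)^2/l₁^2 + (n:ℝ)^2/l₂^2 + (p:ℝ)^2/ε^2)^2 := by
          have : (0:ℝ) < (p:ℝ)^2/ε^2 := by positivity
          have h2 : (0:ℝ) < (m:ℝ)^2/l₁^2 + (n:ℝ)^2/l₂^2 + (p:ℝ)^2/ε^2 := by positivity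
          positivity
        exact aux_amgm _ t _ hL ht (norm_nonneg _)
    have hrhs : Summable (fun k : ℤ×ℤ×ℤ =>
        t/2 * (if k.2.2 = 0 then (0:ℝ) else
          (((k.1:ℝ)^2/l₁^2 + (k.2.1:ℝ)^2/l₂^2 + (k.2.2:ℝ)^2/ε^2)^2)⁻¹) +
        1/(2*t) * (((k.1 : ℝ) ^ 2 / l₁ ^ 2 + (k.2.1 : ℝ) ^ 2 / l₂ ^ 2 +
            (k.2.2 : ℝ) ^ 2 / ε ^ 2) ^ 2 * ‖what k‖ ^ 2)) :=
      (hVsum.mul_left _).add (hS2.mul_left _)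
    calc (∑' k : ℤ×ℤ×ℤ, ‖what k‖) ≤ ∑' k : ℤ×ℤ×ℤ,
        (t/2 * (if k.2.2 = 0 then (0:ℝ) else
          (((k.1:ℝ)^2/l₁^2 + (k.2.1:ℝ)^2/l₂^2 + (k.2.2:ℝ)^2/ε^2)^2)⁻¹) +
        1/(2*t) * (((k.1 : ℝ) ^ 2 / l₁ ^ 2 + (k.2.1 : ℝ) ^ 2 / l₂ ^ 2 +
            (k.2.2 : ℝ) ^ 2 / ε ^ 2) ^ 2 * ‖what k‖ ^ 2)) :=
          Summable.tsum_le_tsum hpt habs hrhs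
    _ = t/2 * T + 1/(2*t) * S := by
          rw [Summable.tsum_add (hVsum.mul_left _) (hS2.mul_left _), tsum_mul_left, tsum_mul_left]
  rcases hSnn.eq_or_lt with hS0 | hSpos
  · -- S = 0 : all coefficients vanish
    have hterm : ∀ k : ℤ×ℤ×ℤ, ((k.1 : ℝ) ^ 2 / l₁ ^ 2 + (k.2.1 : ℝ) ^ 2 / l₂ ^ 2 +
        (k.2.2 : ℝ) ^ 2 / ε ^ 2) ^ 2 * ‖what k‖ ^ 2 = 0 := by
      intro k
      have hle := Summable.le_tsum hS2 k (fun j _ => by positivity)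
      have hnn : (0:ℝ) ≤ ((k.1 : ℝ) ^ 2 / l₁ ^ 2 + (k.2.1 : ℝ) ^ 2 / l₂ ^ 2 +
          (k.2.2 : ℝ) ^ 2 / ε ^ 2) ^ 2 * ‖what k‖ ^ 2 := by positivity
      rw [← hS_def] at hle
      linarith [hle, hS0.le]
    have habs0 : ∀ k : ℤ×ℤ×ℤ, ‖what k‖ = 0 := by
      rintro ⟨m, n, p⟩
      by_cases hp : p = 0
      · subst hp; rw [hQ m n]; simp
      · have h1' : (1:ℝ) ≤ ((p:ℝ))^2 := by
          have : (1:ℤ) ≤ p^2 := by rcases lt_or_gt_of_ne hp with h|h <;> nlinarith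
          exact_mod_cast this
        have hL : (0:ℝ) < ((m:ℝ)^2/l₁^2 + (n:ℝ)^2/l₂^2 + (p:ℝ)^2/ε^2)^2 := by
          have h2 : (0:ℝ) < (m:ℝ)^2/l₁^2 + (n:ℝ)^2/l₂^2 + (p:ℝ)^2/ε^2 := by positivity
          positivity
        have := hterm (m, n, p)
        have habs2 : ‖what (m, n, p)‖ ^ 2 = 0 := by
          rcases mul_eq_zero.mp this with h | h
          · exact absurd h (ne_of_gt hL)
          · exact h
        exact pow_eq_zero_iff (n := 2) (by norm_num) |>.mp habs2
    have hz : (∑' k : ℤ×ℤ×ℤ, ‖what k‖) = 0 := by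
      rw [tsum_congr habs0]
      exact tsum_zero
    calc ‖w (x, y, z)‖ ≤ 0 := by rw [← hz]; exact step1
    _ ≤ 32 * Real.sqrt ε * Real.sqrt ((2 * Real.pi) ^ 4 * (l₁ * l₂ * ε) * S) := by positivity
  · -- S > 0
    set K : ℝ := 1000*(l₁*l₂)*ε^2 with hK_def
    have hKpos : 0 < K := by rw [hK_def]; positivity
    set t : ℝ := Real.sqrt S / Real.sqrt K with ht_def
    have hsS : 0 < Real.sqrt S := Real.sqrt_pos.mpr hSpos
    have hsK : 0 < Real.sqrt K := Real.sqrt_pos.mpr hKpos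
    have ht : 0 < t := div_pos hsS hsK
    have haS : Real.sqrt S * Real.sqrt S = S := Real.mul_self_sqrt hSpos.le
    have haK : Real.sqrt K * Real.sqrt K = K := Real.mul_self_sqrt hKpos.le
    have hcalc : t/2 * K + 1/(2*t) * S = Real.sqrt S * Real.sqrt K := by
      rw [ht_def]
      field_simp
      nlinarith [haS, haK]
    have hchain : ‖w (x, y, z)‖ ≤ Real.sqrt S * Real.sqrt K := by
      calc ‖w (x, y, z)‖ ≤ ∑' k : ℤ×ℤ×ℤ, ‖what k‖ := step1
      _ ≤ t/2 * T + 1/(2*t) * S := step2 t ht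
      _ ≤ t/2 * K + 1/(2*t) * S := by
            have h2 : T ≤ K := by rw [hK_def, hT_def]; exact hVle
            nlinarith [ht.le, h2]
      _ = Real.sqrt S * Real.sqrt K := hcalc
    have h2pi : (1:ℝ) ≤ 2*Real.pi := by nlinarith [Real.pi_gt_three]
    have hp4 : (1:ℝ) ≤ (2*Real.pi)^4 := by
      calc (1:ℝ) = 1^4 := (one_pow 4).symm
      _ ≤ (2*Real.pi)^4 := pow_le_pow_left₀ (by norm_num) h2pi 4
    have hfin : Real.sqrt S * Real.sqrt K ≤
        32 * Real.sqrt ε * Real.sqrt ((2 * Real.pi) ^ 4 * (l₁ * l₂ * ε) * S) := by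
      have hX : (0:ℝ) ≤ (2 * Real.pi) ^ 4 * (l₁ * l₂ * ε) * S := by positivity
      calc Real.sqrt S * Real.sqrt K = Real.sqrt (S * K) := (Real.sqrt_mul hSpos.le _).symm
      _ ≤ Real.sqrt (1024 * ε * ((2 * Real.pi) ^ 4 * (l₁ * l₂ * ε) * S)) := by
            apply Real.sqrt_le_sqrt
            have hY : (0:ℝ) ≤ l₁ * l₂ * ε^2 * S := by positivity
            have := mul_le_mul_of_nonneg_right hp4 hY
            calc S * K = 1000 * (l₁ * l₂ * ε^2 * S) := by rw [hK_def]; ring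
            _ ≤ 1024 * ((2*Real.pi)^4 * (l₁ * l₂ * ε^2 * S)) := by nlinarith
            _ = 1024 * ε * ((2 * Real.pi) ^ 4 * (l₁ * l₂ * ε) * S) := by ring
      _ = Real.sqrt (1024 * ε) * Real.sqrt ((2 * Real.pi) ^ 4 * (l₁ * l₂ * ε) * S) :=
            Real.sqrt_mul (by positivity) _
      _ = 32 * Real.sqrt ε * Real.sqrt ((2 * Real.pi) ^ 4 * (l₁ * l₂ * ε) * S) := by
            rw [Real.sqrt_mul (by norm_num : (0:ℝ) ≤ 1024) ε,
              show Real.sqrt (1024:ℝ) = 32 by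
                rw [show (1024:ℝ) = 32^2 by norm_num, Real.sqrt_sq (by norm_num)]]
    exact hchain.trans hfin
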